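/- If G is a good graph of order n containing a cycle with minimum degree δ(G) = 2, then the maximum degree satisfies Δ(G) ≥ n − 2. -/
import Mathlib


/-- Number of k-nearly independent vertex subsets: subsets whose induced subgraph has exactly k edges. -/
def sigmaK {V : Type*} [Fintype V] [DecidableEq V] (G : SimpleGraph V) [DecidableRel G.Adj] (k : ℕ) : ℕ :=
  (Finset.univ.filter fun s : Finset V =>
    (s.sym2.filter fun e => e ∈ G.edgeSet).card = k).card

/-- A graph is good if for every edge uv, N[u] ∪ N[v] = V(G). -/
def IsGoodGraph {V : Type*} (G : SimpleGraph V) : Prop :=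
  ∀ u v : V, G.Adj u v →
    (insert u (G.neighborSet u)) ∪ (insert v (G.neighborSet v)) = Set.univ

theorem stmt14 {V : Type*} [Fintype V] [Nonempty V] (G : SimpleGraph V) [DecidableRel G.Adj]
    (hgood : IsGoodGraph G) (hcyc : ¬ G.IsAcyclic)
    (hmin : G.minDegree = 2) :
    Fintype.card V - 2 ≤ G.maxDegree := by
  classical
  obtain ⟨u, hu⟩ := G.exists_minimal_degree_vertex
  rw [hmin] at hu
  have hcard2 : (G.neighborFinset u).card = 2 := by
    rw [G.card_neighborFinset_eq_degree]; omega
  obtain ⟨v, w, hvw, hN⟩ := Finset.card_eq_two.mp hcard2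
  have hadj : G.Adj u v := by
    rw [← SimpleGraph.mem_neighborFinset, hN]; simp
  have hg := hgood u v hadj
  -- claim: univ \ {w} ⊆ insert v (neighborFinset v)
  have hsub : (Finset.univ : Finset V) \ {w} ⊆ insert v (G.neighborFinset v) := by
    intro x hx
    simp only [Finset.mem_sdiff, Finset.mem_singleton] at hx
    have hxw : x ≠ w := hx.2
    by_cases hxv : x = v
    · simp [hxv]
    by_cases hxu : x = u
    · subst hxu
      simp [SimpleGraph.mem_neighborFinset, hadj.symm]
    · have : x ∈ (insert u (G.neighborSet u)) ∪ (insert v (G.neighborSet v)) := by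
        rw [hg]; trivial
      rcases this with h | h
      · rcases h with h | h
        · exact absurd h hxu
        · have : x ∈ G.neighborFinset u := by rwa [SimpleGraph.mem_neighborFinset]
          rw [hN] at this
          simp only [Finset.mem_insert, Finset.mem_singleton] at this
          rcases this with h | h
          · exact absurd h hxv
          · exact absurd h hxw
      · rcases h with h | h
        · exact absurd h hxv
        · simp only [Finset.mem_insert, SimpleGraph.mem_neighborFinset]; exact Or.inr h
  have hc1 : ((Finset.univ : Finset V) \ {w}).card = Fintype.card V - 1 := by
    rw [Finset.card_sdiff_of_subset (by simp)]; simp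
  have hc2 : (insert v (G.neighborFinset v)).card = G.degree v + 1 := by
    rw [Finset.card_insert_of_notMem (by simp), G.card_neighborFinset_eq_degree]
  have hle := Finset.card_le_card hsub
  rw [hc1, hc2] at hle
  have := G.degree_le_maxDegree v
  omega
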